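/- Eigenvalue monotonicity can fail for non-integer θ: for λ = (2,2,1) and μ = (2,1,1,1), partitions of 5, λ strictly dominates μ, but for any θ ∈ (1, 3/2) one has |∏_b (θ + c^λ(b))| < |∏_b (θ + c^μ(b))|, since the ratio of absolute values equals θ/(3−θ) < 1. -/

import Mathlib

open Finset

/-- Young diagram of a partition -/
def toYD {n : ℕ} (p : Nat.Partition n) : YoungDiagram :=
  YoungDiagram.ofRowLens (p.parts.sort (· ≥ ·)) ((Multiset.pairwise_sort p.parts (· ≥ ·)).sortedGE)

/-- dominance order on partitions of `n` -/
def Dominates {n : ℕ} (p q : Nat.Partition n) : Prop :=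
  ∀ j, ((q.parts.sort (· ≥ ·)).take j).sum ≤ ((p.parts.sort (· ≥ ·)).take j).sum

lemma hsort1 : (({2,2,1} : Multiset ℕ)).sort (· ≥ ·) = [2,2,1] := by
  apply List.Perm.eq_of_pairwise' (Multiset.pairwise_sort _ _) (by decide) (Multiset.coe_eq_coe.mp ?_)
  rw [Multiset.sort_eq]; rfl

lemma hsort2 : (({2,1,1,1} : Multiset ℕ)).sort (· ≥ ·) = [2,1,1,1] := by
  apply List.Perm.eq_of_pairwise' (Multiset.pairwise_sort _ _) (by decide) (Multiset.coe_eq_coe.mp ?_)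
  rw [Multiset.sort_eq]; rfl

/-- Counterexample to eigenvalue monotonicity for non-integer parameter:
`λ = (2,2,1)` strictly dominates `μ = (2,1,1,1)`, but for `θ ∈ (1, 3/2)` the content
polynomial of `λ` is strictly smaller in absolute value than that of `μ`; indeed the
ratio of the absolute values is `θ/(3−θ) < 1`. -/
theorem stmt8 (p q : Nat.Partition 5)
    (hp : p.parts = {2, 2, 1}) (hq : q.parts = {2, 1, 1, 1}) :
    (Dominates p q ∧ p ≠ q) ∧
    ∀ θ : ℝ, 1 < θ → θ < 3 / 2 →
      |∏ b ∈ (toYD p).cells, (θ + b.2 - b.1)| <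
        |∏ b ∈ (toYD q).cells, (θ + b.2 - b.1)| ∧
      |∏ b ∈ (toYD p).cells, (θ + b.2 - b.1)| /
        |∏ b ∈ (toYD q).cells, (θ + b.2 - b.1)| = θ / (3 - θ) ∧
      θ / (3 - θ) < 1 := by
  have hcp : (toYD p).cells = {(0,0),(0,1),(1,0),(1,1),(2,0)} := by
    simp only [toYD, hp, hsort1]
    exact (by decide :
      (YoungDiagram.ofRowLens [2,2,1] (by decide)).cells = {(0,0),(0,1),(1,0),(1,1),(2,0)})
  have hcq : (toYD q).cells = {(0,0),(0,1),(1,0),(2,0),(3,0)} := by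
    simp only [toYD, hq, hsort2]
    exact (by decide :
      (YoungDiagram.ofRowLens [2,1,1,1] (by decide)).cells = {(0,0),(0,1),(1,0),(2,0),(3,0)})
  refine ⟨⟨?_, ?_⟩, ?_⟩
  · intro j
    rw [hp, hq, hsort1, hsort2]
    match j with
    | 0 => simp
    | 1 => simp
    | 2 => simp
    | 3 => simp
    | (n+4) =>
      rw [List.take_of_length_le (by simp), List.take_of_length_le (by simp)]
      simp
  · intro h
    rw [h, hq] at hp
    exact absurd hp (by decide)
  · intro θ h1 h2
    have ep : ∏ b ∈ (toYD p).cells, (θ + b.2 - b.1) = θ*(θ+1)*(θ-1)*θ*(θ-2) := by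
      rw [hcp]
      norm_num [Finset.prod_insert, Finset.mem_insert, Prod.ext_iff]
      ring
    have eq' : ∏ b ∈ (toYD q).cells, (θ + b.2 - b.1) = θ*(θ+1)*(θ-1)*(θ-2)*(θ-3) := by
      rw [hcq]
      norm_num [Finset.prod_insert, Finset.mem_insert, Prod.ext_iff]
      ring
    have t0 : (0:ℝ) < θ := by linarith
    have t1 : (0:ℝ) < θ + 1 := by linarith
    have t2 : (0:ℝ) < θ - 1 := by linarith
    have t3 : (0:ℝ) < 2 - θ := by linarith
    have t4 : (0:ℝ) < 3 - θ := by linarith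
    have A1 : (0:ℝ) < θ*(θ+1)*(θ-1)*θ*(2-θ) :=
      mul_pos (mul_pos (mul_pos (mul_pos t0 t1) t2) t0) t3
    have A2 : (0:ℝ) < θ*(θ+1)*(θ-1)*(2-θ)*(3-θ) :=
      mul_pos (mul_pos (mul_pos (mul_pos t0 t1) t2) t3) t4
    have hap : |θ*(θ+1)*(θ-1)*θ*(θ-2)| = θ*(θ+1)*(θ-1)*θ*(2-θ) := by
      rw [abs_of_neg (by nlinarith [A1])]; ring
    have haq : |θ*(θ+1)*(θ-1)*(θ-2)*(θ-3)| = θ*(θ+1)*(θ-1)*(2-θ)*(3-θ) := by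
      rw [abs_of_pos (by nlinarith [A2])]; ring
    rw [ep, eq', hap, haq]
    have hB : (0:ℝ) < θ*(θ+1)*(θ-1)*(2-θ) :=
      mul_pos (mul_pos (mul_pos t0 t1) t2) t3
    refine ⟨by nlinarith [hB], ?_, ?_⟩
    · rw [div_eq_div_iff (ne_of_gt A2) (by linarith)]; ring
    · rw [div_lt_one (by linarith)]; linarith
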